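/- For every connected graph G, a set T ⊆ V(G) is a minimal connected dominating set of G if and only if T is a minimal transversal of the hypergraph S(G) of inclusion-minimal separators of G; that is, CD(G) = tr(S(G)). -/

import Mathlib

open Set

variable {V : Type*}

/-- The closed neighbourhood `N_G[A]` of a set of vertices. -/
def closedNbhdSet (G : SimpleGraph V) (A : Set V) : Set V :=
  ⋃ x ∈ A, insert x (G.neighborSet x)

/-- `D` is a dominating set of `G`. -/
def Dominates (G : SimpleGraph V) (D : Set V) : Prop := ∀ v, v ∈ closedNbhdSet G D

/-- `D` is a connected dominating set of `G`: a dominating set inducing a connected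
subgraph. -/
def ConnDom (G : SimpleGraph V) (D : Set V) : Prop :=
  Dominates G D ∧ (G.induce D).Connected

/-- `S` is a separator of `G`: removing `S` leaves a graph which is not connected. -/
def Separator (G : SimpleGraph V) (S : Set V) : Prop := ¬ (G.induce Sᶜ).Connected

/-- `T` is a transversal of the hypergraph with hyperedge set `E`. -/
def Transversal (E : Set (Set V)) (T : Set V) : Prop := ∀ e ∈ E, (T ∩ e).Nonempty

section Aux

variable {G : SimpleGraph V}

lemma aux_walk_closed {s A : Set V}
    (hcl : ∀ u v, u ∈ A → v ∈ s → G.Adj u v → v ∈ A)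
    {x y : ↥s} (w : (G.induce s).Walk x y) (hx : (x : V) ∈ A) : (y : V) ∈ A := by
  induction w with
  | nil => exact hx
  | @cons a b c h _ ih => exact ih (hcl _ _ hx b.2 h)

lemma aux_univ_separator : Separator G (univ : Set V) := by
  intro h
  exact h.nonempty.elim fun x => x.2 (mem_univ _)

lemma aux_exists_minimal_sep [Fintype V] {S : Set V} (hS : Separator G S) :
    ∃ S', Minimal (Separator G) S' ∧ S' ⊆ S := by
  obtain ⟨a, ⟨haS, haSub⟩, hmin⟩ :=
    Set.Finite.exists_minimalFor id {S' | Separator G S' ∧ S' ⊆ S}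
      (Set.toFinite _) ⟨S, hS, subset_rfl⟩
  refine ⟨a, ⟨haS, fun y hy hya => ?_⟩, haSub⟩
  exact (@hmin y ⟨hy, hya.trans haSub⟩ hya)

lemma aux_conndom_hits (hCD : ConnDom G T) {S : Set V} (hS : Separator G S) :
    (T ∩ S).Nonempty := by
  by_contra h
  rw [Set.not_nonempty_iff_eq_empty] at h
  have hTS : T ⊆ Sᶜ := fun t ht hs => (Set.eq_empty_iff_forall_notMem.mp h t) ⟨ht, hs⟩
  apply hS
  -- every vertex of Sᶜ reaches some vertex of T within induce Sᶜ
  have key : ∀ x : ↥(Sᶜ), ∃ t : V, ∃ ht : t ∈ T,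
      (G.induce Sᶜ).Reachable x ⟨t, hTS ht⟩ := by
    intro x
    obtain ⟨t, ht, hx⟩ := by
      simpa [closedNbhdSet] using hCD.1 (x : V)
    rcases hx with h1 | h2
    · exact ⟨t, ht, by rw [show x = (⟨t, hTS ht⟩ : ↥(Sᶜ)) from Subtype.ext h1]⟩
    · refine ⟨t, ht, SimpleGraph.Adj.reachable ?_⟩
      exact (SimpleGraph.comap_adj.mpr h2).symm
  obtain ⟨t0⟩ := hCD.2.nonempty
  haveI : Nonempty ↥(Sᶜ) := ⟨⟨t0, hTS t0.2⟩⟩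
  refine SimpleGraph.Connected.mk ?_
  intro a b
  obtain ⟨ta, hta, hra⟩ := key a
  obtain ⟨tb, htb, hrb⟩ := key b
  have hmap : (G.induce Sᶜ).Reachable ⟨ta, hTS hta⟩ ⟨tb, hTS htb⟩ := by
    have := (hCD.2.preconnected ⟨ta, hta⟩ ⟨tb, htb⟩).map (G.induceHomOfLE hTS).toHom
    exact this
  exact (hra.trans hmap).trans hrb.symm

lemma aux_hits_conndom (hG : G.Connected)
    (hT : ∀ S : Set V, Separator G S → (T ∩ S).Nonempty) : ConnDom G T := by
  obtain ⟨t0, ht0, -⟩ := hT univ aux_univ_separator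
  have hdom : Dominates G T := by
    intro v
    by_contra hv
    have hvT : v ∉ T := fun h => hv (by
      simp only [closedNbhdSet, mem_iUnion]
      exact ⟨v, h, mem_insert _ _⟩)
    have hsep : ¬ Separator G (G.neighborSet v) := by
      intro hS
      obtain ⟨t, htT, htN⟩ := hT _ hS
      exact hv (by
        simp only [closedNbhdSet, mem_iUnion]
        exact ⟨t, htT, Or.inr ((G.adj_symm htN : G.Adj t v) : v ∈ G.neighborSet t)⟩)
    rw [Separator, not_not] at hsep
    have hvc : v ∈ (G.neighborSet v)ᶜ := fun h => (G.loopless.irrefl v) h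
    have ht0c : t0 ∈ (G.neighborSet v)ᶜ := by
      intro h
      exact hv (by
        simp only [closedNbhdSet, mem_iUnion]
        exact ⟨t0, ht0, Or.inr ((h : G.Adj v t0).symm : v ∈ G.neighborSet t0)⟩)
    have hne : v ≠ t0 := fun h => hvT (h ▸ ht0)
    obtain ⟨w⟩ := hsep.preconnected ⟨v, hvc⟩ ⟨t0, ht0c⟩
    cases w with
    | nil => exact hne rfl
    | cons h _ =>
      rename_i u _
      exact u.2 (SimpleGraph.comap_adj.mp h : G.Adj v u)
  refine ⟨hdom, ?_⟩
  haveI : Nonempty ↥T := ⟨⟨t0, ht0⟩⟩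
  refine SimpleGraph.Connected.mk ?_
  intro a b
  by_contra hnr
  set A : Set V := {v | ∃ h : v ∈ T, (G.induce T).Reachable a ⟨v, h⟩} with hA
  have haA : (a : V) ∈ A := ⟨a.2, by rw [show (⟨(a:V), a.2⟩ : ↥T) = a from rfl]⟩
  have hbA : (b : V) ∉ A := by
    rintro ⟨h, hr⟩
    exact hnr (by rwa [show (⟨(b:V), h⟩ : ↥T) = b from Subtype.ext rfl] at hr)
  set S : Set V := {v | v ∉ A ∧ ∃ u ∈ A, G.Adj u v} with hSdef
  have hST : T ∩ S = ∅ := by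
    rw [Set.eq_empty_iff_forall_notMem]
    rintro t ⟨htT, htA, u, huA, hadj⟩
    obtain ⟨huT, hur⟩ := huA
    exact htA ⟨htT, hur.trans (SimpleGraph.Adj.reachable
      (by exact hadj : (G.induce T).Adj ⟨u, huT⟩ ⟨t, htT⟩))⟩
  have hsep : ¬ Separator G S := by
    intro hS
    obtain ⟨t, ht⟩ := hT _ hS
    exact (Set.eq_empty_iff_forall_notMem.mp hST t) ht
  rw [Separator, not_not] at hsep
  have haS : (a : V) ∈ Sᶜ := fun h => (Set.eq_empty_iff_forall_notMem.mp hST a) ⟨a.2, h⟩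
  have hbS : (b : V) ∈ Sᶜ := fun h => (Set.eq_empty_iff_forall_notMem.mp hST b) ⟨b.2, h⟩
  obtain ⟨w⟩ := hsep.preconnected ⟨a, haS⟩ ⟨b, hbS⟩
  have hcl : ∀ u v, u ∈ A → v ∈ Sᶜ → G.Adj u v → v ∈ A := by
    intro u v huA hvS hadj
    by_contra hvA
    exact hvS ⟨hvA, u, huA, hadj⟩
  exact hbA (aux_walk_closed hcl w haA)

end Aux

/-- For every connected graph `G`, the minimal connected dominating sets of `G` are
exactly the minimal transversals of the hypergraph of inclusion-minimal separators
of `G`; that is, `CD(G) = tr(S(G))`. -/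
theorem stmt_19 [Fintype V] (G : SimpleGraph V) (hG : G.Connected) (T : Set V) :
    Minimal (ConnDom G) T ↔
      Minimal (Transversal {S : Set V | Minimal (Separator G) S}) T := by
  have key : ∀ X : Set V, ConnDom G X ↔
      Transversal {S : Set V | Minimal (Separator G) S} X := by
    intro X
    constructor
    · intro hCD e he
      exact aux_conndom_hits hCD he.1
    · intro htr
      refine aux_hits_conndom hG fun S hS => ?_
      obtain ⟨S', hS', hsub⟩ := aux_exists_minimal_sep hS
      obtain ⟨t, htX, htS⟩ := htr S' hS'
      exact ⟨t, htX, hsub htS⟩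
  have heq : ConnDom G = Transversal {S : Set V | Minimal (Separator G) S} :=
    funext fun X => propext (key X)
  rw [heq]
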